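/- Let n ≥ 1 and k ≥ 2 be integers. Let S and G be finite subsets of F₂ⁿ with 2^k < 4·|S|, 2·|S| ≤ 2^k, and 2·|G| ≤ |S|. Then Pr[∃ x ∈ S : A·x + b = y] − Pr[∃ x ∈ G : A·x + b = y] > 1/16, where the probability is over a uniformly random triple (A, b, y) with A a k×n matrix over F₂ and b, y ∈ F₂^k. -/

import Mathlib

open Finset

section GSaux

variable {n k : ℕ}

private def GSev (k n : ℕ) (x : Fin n → ZMod 2) :
    Finset (Matrix (Fin k) (Fin n) (ZMod 2) × (Fin k → ZMod 2) × (Fin k → ZMod 2)) :=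
  Finset.univ.filter (fun t => t.1.mulVec x + t.2.1 = t.2.2)

private lemma mem_GSev {x : Fin n → ZMod 2}
    {t : Matrix (Fin k) (Fin n) (ZMod 2) × (Fin k → ZMod 2) × (Fin k → ZMod 2)} :
    t ∈ GSev k n x ↔ t.1.mulVec x + t.2.1 = t.2.2 := by
  simp [GSev]

private lemma card_matvec :
    (Finset.univ : Finset (Matrix (Fin k) (Fin n) (ZMod 2) × (Fin k → ZMod 2))).card
      = 2 ^ (k * n + k) := by
  simp only [card_univ, Fintype.card_prod]
  show Fintype.card (Fin k → Fin n → ZMod 2) * _ = _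
  simp only [Fintype.card_fun, Fintype.card_fin, ZMod.card]
  rw [← pow_mul, ← pow_add, Nat.mul_comm n k]

private lemma card_GSev (x : Fin n → ZMod 2) : (GSev k n x).card = 2 ^ (k * n + k) := by
  rw [← card_matvec (n := n) (k := k)]
  refine Finset.card_bij' (fun t _ => (t.1, t.2.2))
    (fun p _ => (p.1, p.2 - p.1.mulVec x, p.2)) ?_ ?_ ?_ ?_
  · intro a _; exact mem_univ _
  · intro p _; rw [mem_GSev]; simp
  · intro t ht; rw [mem_GSev] at ht
    obtain ⟨A, b, y⟩ := t
    simp only at ht ⊢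
    rw [← ht]; simp
  · intro p _; rfl

private lemma GS_ker_bound (v : Fin n → ZMod 2) (hv : v ≠ 0) :
    (Finset.univ.filter
      (fun A : Matrix (Fin k) (Fin n) (ZMod 2) => A.mulVec v = 0)).card * 2 ^ k
      ≤ 2 ^ (k * n) := by
  obtain ⟨i, hi⟩ : ∃ i, v i ≠ 0 := by
    by_contra h; push_neg at h; exact hv (funext h)
  have hvi : v i = 1 := by
    have : ∀ a : ZMod 2, a ≠ 0 → a = 1 := by decide
    exact this _ hi
  -- rank one matrix
  set D : (Fin k → ZMod 2) → Matrix (Fin k) (Fin n) (ZMod 2) :=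
    fun w => Matrix.of (fun r c => if c = i then w r else 0) with hD
  have hDv : ∀ w, (D w).mulVec v = w := by
    intro w; ext r
    simp only [hD, Matrix.mulVec, dotProduct, Matrix.of_apply, ite_mul, zero_mul]
    rw [Finset.sum_ite_eq' Finset.univ i (fun c => w r * v c)]
    simp [hvi]
  have hcard : (Finset.univ : Finset (Matrix (Fin k) (Fin n) (ZMod 2))).card
      = 2 ^ (k * n) := by
    rw [card_univ]
    show Fintype.card (Fin k → Fin n → ZMod 2) = _
    simp only [Fintype.card_fun, Fintype.card_fin, ZMod.card]
    rw [← pow_mul, Nat.mul_comm n k]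
  rw [← hcard]
  have h2k : (2:ℕ) ^ k = (Finset.univ : Finset (Fin k → ZMod 2)).card := by
    simp [card_univ]
  rw [h2k, ← Finset.card_product]
  apply Finset.card_le_card_of_injOn (fun p => p.1 + D p.2)
  · intro a _; exact mem_univ _
  · intro p hp q hq hpq
    simp only [coe_product, Set.mem_prod, mem_coe, mem_filter] at hp hq
    have hpq' : p.1 + D p.2 = q.1 + D q.2 := hpq
    have h2 : p.2 = q.2 := by
      have := congrArg (fun M => Matrix.mulVec M v) hpq'
      simpa [Matrix.add_mulVec, hDv, hp.1.2, hq.1.2] using this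
    have h1 : p.1 = q.1 := by
      rw [h2] at hpq'
      exact add_right_cancel hpq'
    exact Prod.ext h1 h2

private lemma GS_pair_bound (x y : Fin n → ZMod 2) (hxy : x ≠ y) :
    (GSev k n x ∩ GSev k n y).card ≤ 2 ^ (k * n) := by
  set v := x - y with hv
  have hv0 : v ≠ 0 := sub_ne_zero.mpr hxy
  refine le_trans ?_ (GS_ker_bound v hv0)
  have h2k : (2:ℕ) ^ k = (Finset.univ : Finset (Fin k → ZMod 2)).card := by
    simp [card_univ]
  rw [h2k, ← Finset.card_product]
  apply Finset.card_le_card_of_injOn (fun t => (t.1, t.2.2))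
  · intro t ht
    rw [mem_coe, mem_inter, mem_GSev, mem_GSev] at ht
    rw [mem_coe, mem_product, mem_filter]
    refine ⟨⟨mem_univ _, ?_⟩, mem_univ _⟩
    have : t.1.mulVec x = t.1.mulVec y := by
      have := ht.1.trans ht.2.symm
      exact add_right_cancel this
    rw [hv, Matrix.mulVec_sub, this, sub_self]
  · intro t ht u hu htu
    rw [mem_coe, mem_inter, mem_GSev, mem_GSev] at ht hu
    have htu' : (t.1, t.2.2) = (u.1, u.2.2) := htu
    have h1 : t.1 = u.1 := (Prod.ext_iff.mp htu').1
    have h3 : t.2.2 = u.2.2 := (Prod.ext_iff.mp htu').2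
    have h2 : t.2.1 = u.2.1 := by
      have ht1 := ht.1; have hu1 := hu.1
      rw [← h1, ← h3] at hu1
      exact add_left_cancel (ht1.trans hu1.symm)
    exact Prod.ext h1 (Prod.ext h2 h3)

private lemma GS_bonferroni {ι Ω : Type*} [DecidableEq ι] [DecidableEq Ω]
    (E : ι → Finset Ω) (s : Finset ι) :
    2 * ∑ x ∈ s, (E x).card ≤ 2 * (s.biUnion E).card + ∑ p ∈ s.offDiag, (E p.1 ∩ E p.2).card := by
  induction s using Finset.induction_on with
  | empty => simp
  | @insert a s ha ih =>
    rw [Finset.sum_insert ha, Finset.biUnion_insert, Finset.offDiag_insert ha]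
    have hdisj1 : Disjoint (s.offDiag ∪ {a} ×ˢ s) (s ×ˢ {a}) := by
      rw [Finset.disjoint_left]
      rintro ⟨p1, p2⟩ hp hq
      simp only [mem_union, mem_offDiag, mem_product, mem_singleton] at hp hq
      rcases hp with h | h
      · exact ha (hq.2 ▸ h.2.1)
      · exact ha (hq.2 ▸ h.2)
    have hdisj2 : Disjoint (s.offDiag) ({a} ×ˢ s) := by
      rw [Finset.disjoint_left]
      rintro ⟨p1, p2⟩ hp hq
      simp only [mem_offDiag, mem_product, mem_singleton] at hp hq
      exact ha (hq.1 ▸ hp.1)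
    rw [Finset.sum_union hdisj1, Finset.sum_union hdisj2]
    have hsum1 : ∑ p ∈ {a} ×ˢ s, (E p.1 ∩ E p.2).card = ∑ y ∈ s, (E a ∩ E y).card := by
      rw [Finset.sum_product, Finset.sum_singleton]
    have hsum2 : ∑ p ∈ s ×ˢ {a}, (E p.1 ∩ E p.2).card = ∑ y ∈ s, (E a ∩ E y).card := by
      rw [Finset.sum_product]
      simp [inter_comm]
    rw [hsum1, hsum2]
    have key1 : (E a).card + (s.biUnion E).card
        = (E a ∪ s.biUnion E).card + (E a ∩ s.biUnion E).card :=
      (Finset.card_union_add_card_inter _ _).symm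
    have key2 : (E a ∩ s.biUnion E).card ≤ ∑ y ∈ s, (E a ∩ E y).card := by
      have : E a ∩ s.biUnion E = s.biUnion (fun y => E a ∩ E y) := by
        ext w; simp [mem_biUnion]; tauto
      rw [this]
      exact Finset.card_biUnion_le
    omega

end GSaux

theorem goldwasser_sipser_gap (n k : ℕ) (hn : 1 ≤ n) (hk : 2 ≤ k)
    (S G : Finset (Fin n → ZMod 2))
    (hS₁ : 2 ^ k < 4 * S.card) (hS₂ : 2 * S.card ≤ 2 ^ k) (hG : 2 * G.card ≤ S.card) :
    ((Finset.univ.filter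
        (fun t : Matrix (Fin k) (Fin n) (ZMod 2) × (Fin k → ZMod 2) × (Fin k → ZMod 2) =>
          ∃ x ∈ S, t.1.mulVec x + t.2.1 = t.2.2)).card : ℝ) / 2 ^ (k * n + 2 * k) -
      ((Finset.univ.filter
        (fun t : Matrix (Fin k) (Fin n) (ZMod 2) × (Fin k → ZMod 2) × (Fin k → ZMod 2) =>
          ∃ x ∈ G, t.1.mulVec x + t.2.1 = t.2.2)).card : ℝ) / 2 ^ (k * n + 2 * k) >
      1 / 16 := by
  classical
  have hfilter : ∀ (T : Finset (Fin n → ZMod 2)),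
      (Finset.univ.filter
        (fun t : Matrix (Fin k) (Fin n) (ZMod 2) × (Fin k → ZMod 2) × (Fin k → ZMod 2) =>
          ∃ x ∈ T, t.1.mulVec x + t.2.1 = t.2.2)) = T.biUnion (GSev k n) := by
    intro T; ext t
    simp only [mem_filter, mem_univ, true_and, mem_biUnion, mem_GSev]
  rw [hfilter S, hfilter G]
  set NS := (S.biUnion (GSev k n)).card with hNS
  set NG := (G.biUnion (GSev k n)).card with hNG
  -- lower bound on NS
  have hlow : 2 * (S.card * 2 ^ (k * n + k)) ≤ 2 * NS + S.card * S.card * 2 ^ (k * n) := by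
    have h1 := GS_bonferroni (GSev k n) S
    have h2 : ∑ x ∈ S, (GSev k n x).card = S.card * 2 ^ (k * n + k) := by
      rw [Finset.sum_congr rfl (fun x _ => card_GSev x), Finset.sum_const, smul_eq_mul]
    have h3 : ∑ p ∈ S.offDiag, (GSev k n p.1 ∩ GSev k n p.2).card
        ≤ S.card * S.card * 2 ^ (k * n) := by
      calc ∑ p ∈ S.offDiag, (GSev k n p.1 ∩ GSev k n p.2).card
          ≤ ∑ _p ∈ S.offDiag, 2 ^ (k * n) := by
            apply Finset.sum_le_sum
            intro p hp
            rw [mem_offDiag] at hp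
            exact GS_pair_bound p.1 p.2 hp.2.2
        _ = S.offDiag.card * 2 ^ (k * n) := by rw [Finset.sum_const, smul_eq_mul]
        _ ≤ S.card * S.card * 2 ^ (k * n) := by
            apply Nat.mul_le_mul_right
            rw [Finset.offDiag_card]
            omega
    omega
  -- upper bound on NG
  have hup : NG ≤ G.card * 2 ^ (k * n + k) := by
    calc NG ≤ ∑ x ∈ G, (GSev k n x).card := Finset.card_biUnion_le
      _ = G.card * 2 ^ (k * n + k) := by
          rw [Finset.sum_congr rfl (fun x _ => card_GSev x), Finset.sum_const, smul_eq_mul]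
  -- arithmetic
  rw [gt_iff_lt, div_sub_div_same, lt_div_iff₀ (by positivity)]
  have hP : (0:ℝ) < 2 ^ (k * n) := by positivity
  have hK : (0:ℝ) < 2 ^ k := by positivity
  have e1 : (2:ℝ) ^ (k * n + k) = 2 ^ (k * n) * 2 ^ k := by rw [pow_add]
  have e2 : (2:ℝ) ^ (k * n + 2 * k) = 2 ^ (k * n) * 2 ^ k * 2 ^ k := by
    rw [pow_add, two_mul, pow_add]; ring
  have hlowR : 2 * ((S.card : ℝ) * (2 ^ (k * n) * 2 ^ k))
      ≤ 2 * (NS : ℝ) + (S.card : ℝ) * S.card * 2 ^ (k * n) := by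
    have := hlow
    have := (Nat.cast_le (α := ℝ)).mpr hlow
    push_cast at this
    rw [e1] at this
    linarith
  have hupR : (NG : ℝ) ≤ (G.card : ℝ) * (2 ^ (k * n) * 2 ^ k) := by
    have := (Nat.cast_le (α := ℝ)).mpr hup
    push_cast at this
    rw [e1] at this
    linarith
  have hS1R : (2:ℝ) ^ k < 4 * S.card := by exact_mod_cast hS₁
  have hS2R : 2 * (S.card : ℝ) ≤ 2 ^ k := by exact_mod_cast hS₂
  have hGR : 2 * (G.card : ℝ) ≤ S.card := by exact_mod_cast hG
  rw [e2]
  nlinarith [mul_pos hP hK, mul_nonneg hP.le hK.le, sq_nonneg ((S.card:ℝ) - 2^k / 2),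
    mul_le_mul_of_nonneg_left hGR (mul_nonneg hP.le hK.le),
    mul_le_mul_of_nonneg_left hS2R hP.le,
    mul_lt_mul_of_pos_left hS1R (mul_pos hP hK)]
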